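/- Let f ∈ L^p_loc(ℝⁿ) and g ∈ L^p_loc(ℝⁿ), g ≥ 0, satisfy |f(x) - f(y)| ≤ |x - y|(g(x) + g(y)) for a.e. x, y ∈ ℝⁿ. Then for a.e. x, MQf(x) ≤ g(x) + Mg(x) ≤ 2 Mg(x), where MQf is the maximal mean difference quotient and Mg is the Hardy–Littlewood maximal function of g. -/

import Mathlib

open MeasureTheory Metric Filter Topology

/-- The maximal mean difference quotient (values in `ℝ≥0∞`). -/
noncomputable def MQ {n : ℕ} (f : EuclideanSpace ℝ (Fin n) → ℝ)
    (x : EuclideanSpace ℝ (Fin n)) : ENNReal :=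
  ⨆ (r : ℝ) (_ : 0 < r),
    (volume (ball x r))⁻¹ *
      ∫⁻ z in ball x r, ENNReal.ofReal (|f z - f x| / ‖z - x‖)

/-- The centered Hardy–Littlewood maximal function (values in `ℝ≥0∞`). -/
noncomputable def hlMax {n : ℕ} (g : EuclideanSpace ℝ (Fin n) → ℝ)
    (x : EuclideanSpace ℝ (Fin n)) : ENNReal :=
  ⨆ (r : ℝ) (_ : 0 < r),
    (volume (ball x r))⁻¹ * ∫⁻ z in ball x r, ENNReal.ofReal |g z|

/-- Open and closed balls of positive radius agree almost everywhere. -/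
lemma ball_ae_eq_closedBall_aux {n : ℕ} (x : EuclideanSpace ℝ (Fin n)) {r : ℝ} (hr : 0 < r) :
    ball x r =ᵐ[volume] closedBall x r := by
  refine MeasureTheory.ae_eq_set.2 ⟨?_, ?_⟩
  · rw [Set.diff_eq_empty.2 ball_subset_closedBall]; simp
  · refine measure_mono_null (fun z hz => ?_) (Measure.addHaar_sphere_of_ne_zero volume x hr.ne')
    exact mem_sphere.2 (le_antisymm hz.1 (not_lt.1 hz.2))

theorem MQ_le_add_hlMax {n : ℕ} (p : ℝ) (hp : 1 ≤ p)
    (f g : EuclideanSpace ℝ (Fin n) → ℝ)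
    (hf : ∀ K : Set (EuclideanSpace ℝ (Fin n)), IsCompact K →
        MemLp f (ENNReal.ofReal p) (volume.restrict K))
    (hg : ∀ K : Set (EuclideanSpace ℝ (Fin n)), IsCompact K →
        MemLp g (ENNReal.ofReal p) (volume.restrict K))
    (hg_nonneg : ∀ x, 0 ≤ g x)
    (hineq : ∀ᵐ q : EuclideanSpace ℝ (Fin n) × EuclideanSpace ℝ (Fin n),
        |f q.1 - f q.2| ≤ ‖q.1 - q.2‖ * (g q.1 + g q.2)) :
    ∀ᵐ x,
      MQ f x ≤ ENNReal.ofReal (g x) + hlMax g x ∧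
      ENNReal.ofReal (g x) + hlMax g x ≤ 2 * hlMax g x := by
  -- local integrability of g
  have hgi : LocallyIntegrable g volume := by
    rw [locallyIntegrable_iff]
    intro K hK
    have : Fact (volume K < ⊤) := ⟨hK.measure_lt_top⟩
    exact (hg K hK).integrable (by simpa using ENNReal.one_le_ofReal.2 hp)
  -- Lebesgue differentiation for g
  have havg : ∀ᵐ x : EuclideanSpace ℝ (Fin n),
      Tendsto (fun δ : ℝ => ⨍ y in closedBall x δ, g y) (𝓝[>] 0) (𝓝 (g x)) := by
    filter_upwards [IsUnifLocDoublingMeasure.ae_tendsto_average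
      (μ := (volume : Measure (EuclideanSpace ℝ (Fin n)))) hgi 1] with x hx
    exact hx (fun _ => x) id tendsto_id
      (by filter_upwards [self_mem_nhdsWithin] with δ hδ using by simpa using (le_of_lt hδ))
  -- g x ≤ hlMax g x a.e.
  have hkey : ∀ᵐ x : EuclideanSpace ℝ (Fin n), ENNReal.ofReal (g x) ≤ hlMax g x := by
    filter_upwards [havg] with x hx
    have h1 : Tendsto (fun δ : ℝ => ENNReal.ofReal (⨍ y in closedBall x δ, g y)) (𝓝[>] 0)
        (𝓝 (ENNReal.ofReal (g x))) := (ENNReal.continuous_ofReal.tendsto _).comp hx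
    refine le_of_tendsto h1 ?_
    filter_upwards [self_mem_nhdsWithin] with δ (hδ : 0 < δ)
    have he := ball_ae_eq_closedBall_aux x hδ
    have hvol0 : volume (closedBall x δ) ≠ 0 :=
      (lt_of_lt_of_le (measure_ball_pos volume x hδ) (measure_mono ball_subset_closedBall)).ne'
    have hvolT : volume (closedBall x δ) ≠ ⊤ := measure_closedBall_lt_top.ne
    have hint : IntegrableOn g (closedBall x δ) volume :=
      hgi.integrableOn_isCompact (isCompact_closedBall x δ)
    calc ENNReal.ofReal (⨍ y in closedBall x δ, g y)
        = (volume (closedBall x δ))⁻¹ * ∫⁻ z in closedBall x δ, ENNReal.ofReal |g z| := by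
          rw [setAverage_eq, smul_eq_mul, measureReal_def,
            ENNReal.ofReal_mul (inv_nonneg.2 ENNReal.toReal_nonneg),
            ENNReal.ofReal_inv_of_pos (ENNReal.toReal_pos hvol0 hvolT),
            ENNReal.ofReal_toReal hvolT,
            ofReal_integral_eq_lintegral_ofReal hint
              (Eventually.of_forall fun z => hg_nonneg z)]
          congr 1
          exact lintegral_congr fun z => by rw [abs_of_nonneg (hg_nonneg z)]
      _ = (volume (ball x δ))⁻¹ * ∫⁻ z in ball x δ, ENNReal.ofReal |g z| := by
          rw [measure_congr he, setLIntegral_congr he]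
      _ ≤ hlMax g x :=
          le_iSup₂ (f := fun (r : ℝ) (_ : 0 < r) =>
            (volume (ball x r))⁻¹ * ∫⁻ z in ball x r, ENNReal.ofReal |g z|) δ hδ
  filter_upwards [hkey, Measure.ae_ae_of_ae_prod hineq] with x hx hx2
  refine ⟨?_, ?_⟩
  · -- MQ f x ≤ ofReal (g x) + hlMax g x
    unfold MQ
    refine iSup₂_le fun r hr => ?_
    have hvol0 : volume (ball x r) ≠ 0 := (measure_ball_pos volume x hr).ne'
    have hvolT : volume (ball x r) ≠ ⊤ := measure_ball_lt_top.ne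
    have hpt : ∀ᵐ z ∂(volume.restrict (ball x r)),
        ENNReal.ofReal (|f z - f x| / ‖z - x‖) ≤
          ENNReal.ofReal (g x) + ENNReal.ofReal |g z| := by
      refine ae_restrict_of_ae ?_
      filter_upwards [hx2] with z hz
      rcases eq_or_ne z x with rfl | hne
      · simp
      · have hnorm : 0 < ‖z - x‖ := norm_pos_iff.2 (sub_ne_zero.2 hne)
        have hdiv : |f z - f x| / ‖z - x‖ ≤ g x + g z := by
          rw [div_le_iff₀ hnorm]
          calc |f z - f x| = |f x - f z| := abs_sub_comm _ _
            _ ≤ ‖x - z‖ * (g x + g z) := hz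
            _ = (g x + g z) * ‖z - x‖ := by rw [norm_sub_rev, mul_comm]
        calc ENNReal.ofReal (|f z - f x| / ‖z - x‖)
            ≤ ENNReal.ofReal (g x + g z) := ENNReal.ofReal_le_ofReal hdiv
          _ = ENNReal.ofReal (g x) + ENNReal.ofReal |g z| := by
              rw [ENNReal.ofReal_add (hg_nonneg x) (hg_nonneg z),
                abs_of_nonneg (hg_nonneg z)]
    have h2 : (∫⁻ z in ball x r, ENNReal.ofReal (|f z - f x| / ‖z - x‖)) ≤
        ∫⁻ z in ball x r, (ENNReal.ofReal (g x) + ENNReal.ofReal |g z|) :=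
      lintegral_mono_ae hpt
    have h3 : (∫⁻ z in ball x r, (ENNReal.ofReal (g x) + ENNReal.ofReal |g z|)) =
        ENNReal.ofReal (g x) * volume (ball x r) +
          ∫⁻ z in ball x r, ENNReal.ofReal |g z| := by
      rw [lintegral_add_left measurable_const, setLIntegral_const]
    calc (volume (ball x r))⁻¹ * ∫⁻ z in ball x r, ENNReal.ofReal (|f z - f x| / ‖z - x‖)
        ≤ (volume (ball x r))⁻¹ * (ENNReal.ofReal (g x) * volume (ball x r) +
            ∫⁻ z in ball x r, ENNReal.ofReal |g z|) :=
          mul_le_mul_right (h3 ▸ h2) _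
      _ = ENNReal.ofReal (g x) +
            (volume (ball x r))⁻¹ * ∫⁻ z in ball x r, ENNReal.ofReal |g z| := by
          rw [mul_add, mul_comm (ENNReal.ofReal (g x)) (volume (ball x r)), ← mul_assoc,
            ENNReal.inv_mul_cancel hvol0 hvolT, one_mul]
      _ ≤ ENNReal.ofReal (g x) + hlMax g x := by
          gcongr
          exact le_iSup₂ (f := fun (r : ℝ) (_ : 0 < r) =>
            (volume (ball x r))⁻¹ * ∫⁻ z in ball x r, ENNReal.ofReal |g z|) r hr
  · rw [two_mul]
    exact add_le_add_left hx _
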